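/- arXiv:1605.09249 — 2 statements merged into one kernel-verified Lean document; each statement's English description precedes it below -/
import Mathlib

section
/- For every q ∈ (0,1), every x ∈ ℝ^n, and every integer s with 1 ≤ s ≤ n, the best s-term approximation error satisfies σ_s(x) ≤ q (1−q)^{1/q − 1} s^{1 − 1/q} ‖x‖_q, where ‖x‖_q = (∑_{i=1}^n |x[i]|^q)^{1/q}. -/
open Finset

/-- A vector `x ∈ ℝⁿ` is `s`-sparse if it has at most `s` nonzero entries. -/
def IsSparse {n : ℕ} (s : ℕ) (x : Fin n → ℝ) : Prop :=
  (Finset.univ.filter (fun i => x i ≠ 0)).card ≤ s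

/-- The ℓ¹-norm on `ℝⁿ`. -/
noncomputable def l1norm {n : ℕ} (x : Fin n → ℝ) : ℝ := ∑ i, |x i|

/-- The ℓ^q-(quasi-)norm on `ℝⁿ`: `(∑ i |x i|^q)^(1/q)`. -/
noncomputable def lqnorm {n : ℕ} (q : ℝ) (x : Fin n → ℝ) : ℝ :=
  (∑ i, |x i| ^ q) ^ (1 / q)

/-- The best `s`-term approximation error of `x` with respect to the ℓ¹-norm. -/
noncomputable def bestApproxErr {n : ℕ} (s : ℕ) (x : Fin n → ℝ) : ℝ :=
  sInf {r : ℝ | ∃ z : Fin n → ℝ, IsSparse s z ∧ r = l1norm (fun i => x i - z i)}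

lemma key_ineq (q : ℝ) (hq0 : 0 < q) (hq1 : q < 1) (s M t : ℝ)
    (hs : 0 < s) (hM : 0 ≤ M) (ht : 0 ≤ t) :
    t ^ ((1 - q)/q) * (M - s * t) ≤ q * (1 - q) ^ (1/q - 1) * s ^ (1 - 1/q) * M ^ (1/q) := by
  have h1q : 0 < 1 - q := by linarith
  have hrhs : 0 ≤ q * (1 - q) ^ (1/q - 1) * s ^ (1 - 1/q) * M ^ (1/q) := by positivity
  rcases le_or_gt M (s*t) with h | h
  · exact le_trans (mul_nonpos_of_nonneg_of_nonpos (Real.rpow_nonneg ht _) (by linarith)) hrhs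
  · have hMpos : 0 < M := lt_of_le_of_lt (mul_nonneg hs.le ht) h
    set u := s * t / M with hu
    have hu0 : 0 ≤ u := div_nonneg (mul_nonneg hs.le ht) hM
    have hu1 : u ≤ 1 := (div_le_one hMpos).mpr h.le
    have hu1' : 0 ≤ 1 - u := by linarith
    have hgm : u ^ (1-q) * (1-u) ^ q ≤ (1-q) ^ (1-q) * q ^ q := by
      have h2 := Real.geom_mean_le_arith_mean2_weighted h1q.le hq0.le
        (div_nonneg hu0 h1q.le) (div_nonneg hu1' hq0.le) (by ring)
      have e1 : (u/(1-q)) ^ (1-q) = u ^ (1-q) / (1-q) ^ (1-q) := Real.div_rpow hu0 h1q.le _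
      have e2 : ((1-u)/q) ^ q = (1-u) ^ q / q ^ q := Real.div_rpow hu1' hq0.le _
      have e3 : (1-q)*(u/(1-q)) + q*((1-u)/q) = 1 := by field_simp; ring
      rw [e1, e2, e3] at h2
      have hp1 : (0:ℝ) < (1-q) ^ (1-q) := Real.rpow_pos_of_pos h1q _
      have hp2 : (0:ℝ) < q ^ q := Real.rpow_pos_of_pos hq0 _
      have := mul_le_mul_of_nonneg_right h2 (mul_nonneg hp1.le hp2.le)
      calc u^(1-q) * (1-u)^q
          = u ^ (1-q) / (1-q) ^ (1-q) * ((1-u) ^ q / q ^ q) * ((1-q)^(1-q) * q^q) := by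
            field_simp
        _ ≤ 1 * ((1-q)^(1-q)*q^q) := this
        _ = (1-q)^(1-q) * q^q := one_mul _
    have hkey : u ^ ((1-q)/q) * (1-u) ≤ (1-q)^((1-q)/q) * q := by
      have hpow := Real.rpow_le_rpow
        (mul_nonneg (Real.rpow_nonneg hu0 _) (Real.rpow_nonneg hu1' _)) hgm
        (le_of_lt (by positivity : (0:ℝ) < 1/q))
      have hqq : q * (1/q) = 1 := by field_simp
      have eL : (u ^ (1-q) * (1-u) ^ q) ^ (1/q) = u ^ ((1-q)/q) * (1-u) := by
        rw [Real.mul_rpow (Real.rpow_nonneg hu0 _) (Real.rpow_nonneg hu1' _),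
          ← Real.rpow_mul hu0, ← Real.rpow_mul hu1', mul_one_div, hqq, Real.rpow_one]
      have eR : ((1-q) ^ (1-q) * q ^ q) ^ (1/q) = (1-q) ^ ((1-q)/q) * q := by
        rw [Real.mul_rpow (Real.rpow_nonneg h1q.le _) (Real.rpow_nonneg hq0.le _),
          ← Real.rpow_mul h1q.le, ← Real.rpow_mul hq0.le, mul_one_div, hqq, Real.rpow_one]
      rw [eL, eR] at hpow
      exact hpow
    have hC : 0 ≤ M ^ ((1-q)/q) * M / s ^ ((1-q)/q) := by positivity
    have hmul := mul_le_mul_of_nonneg_right hkey hC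
    have hsne : s ≠ 0 := hs.ne'
    have hMne : M ≠ 0 := hMpos.ne'
    have ht' : t = u * (M / s) := by rw [hu]; field_simp
    calc t ^ ((1-q)/q) * (M - s*t)
        = (u ^ ((1-q)/q) * (1-u)) * (M ^ ((1-q)/q) * M / s ^ ((1-q)/q)) := by
          rw [ht', Real.mul_rpow hu0 (by positivity), Real.div_rpow hM hs.le]
          field_simp
      _ ≤ ((1-q) ^ ((1-q)/q) * q) * (M ^ ((1-q)/q) * M / s ^ ((1-q)/q)) := hmul
      _ = q * (1-q)^(1/q-1) * s^(1-1/q) * M^(1/q) := by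
          rw [show (1:ℝ)/q - 1 = (1-q)/q by field_simp,
            show (1:ℝ) - 1/q = -((1-q)/q) by field_simp; ring,
            Real.rpow_neg hs.le,
            show (1:ℝ)/q = (1-q)/q + 1 by field_simp; ring,
            Real.rpow_add hMpos, Real.rpow_one]
          field_simp

/-- Compressibility estimate: for `q ∈ (0,1)`,
`σ_s(x) ≤ q (1-q)^{1/q - 1} s^{1 - 1/q} ‖x‖_q`. -/
theorem bestApproxErr_le (q : ℝ) (hq0 : 0 < q) (hq1 : q < 1)
    (n : ℕ) (x : Fin n → ℝ) (s : ℕ) (hs1 : 1 ≤ s) (hsn : s ≤ n) :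
    bestApproxErr s x ≤
      q * (1 - q) ^ (1 / q - 1) * (s : ℝ) ^ (1 - 1 / q) * lqnorm q x := by
  have h1q : 0 < 1 - q := by linarith
  have hM0 : 0 ≤ ∑ i, |x i| ^ q :=
    Finset.sum_nonneg fun i _ => Real.rpow_nonneg (abs_nonneg _) _
  have hRHS : 0 ≤ q * (1 - q) ^ (1/q - 1) * (s:ℝ) ^ (1 - 1/q) * lqnorm q x := by
    have : 0 ≤ lqnorm q x := Real.rpow_nonneg hM0 _
    positivity
  have hbdd : BddBelow {r : ℝ | ∃ z : Fin n → ℝ, IsSparse s z ∧ r = l1norm (fun i => x i - z i)} := by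
    refine ⟨0, fun r hr => ?_⟩
    obtain ⟨z, _, rfl⟩ := hr
    exact Finset.sum_nonneg fun i _ => abs_nonneg _
  -- sorting permutation: |x (σ k)| is antitone in k
  set σ : Equiv.Perm (Fin n) := Tuple.sort (fun i => -|x i|) with hσ
  set y : Fin n → ℝ := fun k => |x (σ k)| with hy
  have hanti : Antitone y := by
    intro k l hkl
    have := Tuple.monotone_sort (fun i => -|x i|) hkl
    simpa [hy, hσ] using this
  have hy0 : ∀ k, 0 ≤ y k := fun k => abs_nonneg _
  -- the s-sparse approximant
  set z : Fin n → ℝ := fun i => if ((σ.symm i : Fin n) : ℕ) < s then x i else 0 with hz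
  have hzsparse : IsSparse s z := by
    unfold IsSparse
    have hsub : (univ.filter (fun i => z i ≠ 0)) ⊆
        univ.filter (fun i => ((σ.symm i : Fin n) : ℕ) < s) := by
      intro i hi
      simp only [mem_filter, mem_univ, true_and] at hi ⊢
      by_contra hc
      exact hi (by simp [hz, hc])
    refine le_trans (Finset.card_le_card hsub) ?_
    have hmap : (univ.filter (fun i => ((σ.symm i : Fin n) : ℕ) < s)) =
        (univ.filter (fun k : Fin n => (k:ℕ) < s)).map σ.toEmbedding := by
      ext i
      simp only [mem_filter, mem_univ, true_and, Finset.mem_map, Equiv.coe_toEmbedding]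
      constructor
      · intro hi; exact ⟨σ.symm i, hi, by simp⟩
      · rintro ⟨k, hk, rfl⟩
        simpa using hk
    rw [hmap, Finset.card_map]
    have hle' : (univ.filter (fun k : Fin n => (k:ℕ) < s)).card ≤ (Finset.range s).card := by
      apply Finset.card_le_card_of_injOn (fun k : Fin n => (k:ℕ))
      · intro k hk
        simp only [Finset.mem_coe, mem_filter, mem_univ, true_and] at hk
        exact Finset.mem_range.mpr hk
      · exact fun a _ b _ h => Fin.ext h
    simpa using hle'
  -- the approximation error for this z
  set T : ℝ := ∑ k : Fin n, (if (k:ℕ) < s then 0 else y k) with hT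
  have hl1 : l1norm (fun i => x i - z i) = T := by
    unfold l1norm
    rw [hT, ← Equiv.sum_comp σ (fun i => |x i - z i|)]
    refine Finset.sum_congr rfl fun k _ => ?_
    simp only [hz, Equiv.symm_apply_apply]
    split <;> simp [hy]
  have hle : bestApproxErr s x ≤ T :=
    csInf_le hbdd ⟨z, hzsparse, hl1.symm⟩
  refine le_trans hle ?_
  -- case s = n
  rcases lt_or_ge s n with hlt | hge
  · -- main case
    set m : Fin n := ⟨s, hlt⟩ with hm
    set b : ℝ := y m with hb
    have hb0 : 0 ≤ b := hy0 m
    set M : ℝ := ∑ i, |x i| ^ q with hMdef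
    set t : ℝ := b ^ q with htdef
    have ht0 : 0 ≤ t := Real.rpow_nonneg hb0 _
    -- Step A
    have hA : T ≤ b ^ (1-q) * ∑ k : Fin n, (if (k:ℕ) < s then 0 else y k ^ q) := by
      rw [Finset.mul_sum, hT]
      refine Finset.sum_le_sum fun k _ => ?_
      split
      · simp
      · next hk =>
        have hbk : y k ≤ b := hanti (by simp [hm, Fin.le_def]; omega)
        rcases eq_or_lt_of_le (hy0 k) with h0 | h0
        · rw [← h0, Real.zero_rpow hq0.ne', mul_zero]
        · calc y k = y k ^ (1-q) * y k ^ q := by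
                rw [← Real.rpow_add h0, sub_add_cancel, Real.rpow_one]
            _ ≤ b ^ (1-q) * y k ^ q :=
                mul_le_mul_of_nonneg_right
                  (Real.rpow_le_rpow (hy0 k) hbk h1q.le)
                  (Real.rpow_nonneg (hy0 k) _)
    -- Step B
    have hB : ∑ k : Fin n, (if (k:ℕ) < s then 0 else y k ^ q)
        = M - ∑ k : Fin n, (if (k:ℕ) < s then y k ^ q else 0) := by
      have hMy : M = ∑ k, y k ^ q := by
        rw [hMdef, ← Equiv.sum_comp σ (fun i => |x i| ^ q)]
      rw [hMy, ← Finset.sum_sub_distrib]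
      refine Finset.sum_congr rfl fun k _ => ?_
      split <;> ring
    -- Step C
    have hC : (s:ℝ) * t ≤ ∑ k : Fin n, (if (k:ℕ) < s then y k ^ q else 0) := by
      rw [← Finset.sum_filter]
      have hcard : (univ.filter (fun k : Fin n => (k:ℕ) < s)).card = s := by
        have : (univ.filter (fun k : Fin n => (k:ℕ) < s)) = Finset.Iio m := by
          ext k; simp [Fin.lt_def, hm]
        rw [this, Fin.card_Iio]
      have hterm : ∀ k ∈ univ.filter (fun k : Fin n => (k:ℕ) < s), t ≤ y k ^ q := by
        intro k hk
        simp only [mem_filter, mem_univ, true_and] at hk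
        have : b ≤ y k := hanti (by simp [hm, Fin.le_def]; omega)
        exact Real.rpow_le_rpow hb0 this hq0.le
      have := Finset.card_nsmul_le_sum (univ.filter (fun k : Fin n => (k:ℕ) < s))
        (fun k => y k ^ q) t hterm
      rwa [hcard, nsmul_eq_mul] at this
    have hbq : b ^ (1-q) = t ^ ((1-q)/q) := by
      rw [htdef, ← Real.rpow_mul hb0]
      congr 1
      field_simp
    have hchain : T ≤ t ^ ((1-q)/q) * (M - (s:ℝ) * t) := by
      rw [← hbq]
      refine le_trans hA ?_
      rw [hB]
      have : M - ∑ k : Fin n, (if (k:ℕ) < s then y k ^ q else 0) ≤ M - (s:ℝ)*t := by linarith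
      exact mul_le_mul_of_nonneg_left this (Real.rpow_nonneg hb0 _)
    have hspos : (0:ℝ) < (s:ℝ) := by exact_mod_cast hs1
    have hkey := key_ineq q hq0 hq1 (s:ℝ) M t hspos hM0 ht0
    have hlq : lqnorm q x = M ^ (1/q) := rfl
    rw [hlq]
    exact le_trans hchain hkey
  · -- s = n : T = 0
    have hT0 : T = 0 := by
      rw [hT]
      refine Finset.sum_eq_zero fun k _ => ?_
      rw [if_pos (lt_of_lt_of_le k.isLt hge)]
    rw [hT0]
    exact hRHS
end

section
/- For every θ ∈ (0,1) there exists a constant c_θ > 0 such that the following holds for all n, s ∈ ℕ with 1 ≤ s ≤ n: setting d := ⌈(2·log(n/s) + 2)/θ⌉, for every m with c_θ · s · (log(n/s) + 1) ≤ m ≤ n there exists a left d-regular bipartite graph with n left vertices and m right vertices that is an (s, d, θ)-lossless expander. -/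
open Finset

/-- The set of right neighbors of a set `I` of left vertices in a bipartite graph with
edge set `E ⊆ L × R`. -/
def rightNbrs {n m : ℕ} (E : Finset (Fin n × Fin m)) (I : Finset (Fin n)) :
    Finset (Fin m) :=
  Finset.univ.filter (fun j => ∃ i ∈ I, (i, j) ∈ E)

/-- A bipartite graph with edge set `E` is left `d`-regular if every left vertex has
exactly `d` right neighbors. -/
def LeftRegular {n m : ℕ} (E : Finset (Fin n × Fin m)) (d : ℕ) : Prop :=
  ∀ i : Fin n, (rightNbrs E {i}).card = d

/-- A left `d`-regular bipartite graph is an `(s, d, θ)`-lossless expander if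
`#N(I) ≥ (1-θ)·d·#I` for all left vertex sets `I` with `#I ≤ s`. -/
def IsLosslessExpander {n m : ℕ} (E : Finset (Fin n × Fin m)) (s d : ℕ) (θ : ℝ) : Prop :=
  LeftRegular E d ∧
    ∀ I : Finset (Fin n), I.card ≤ s →
      (1 - θ) * d * I.card ≤ (rightNbrs E I).card

namespace LosslessAux

/-- `t^t ≤ e^t · t!` -/
lemma pow_self_le_exp_mul_factorial : ∀ t : ℕ, (t : ℝ) ^ t ≤ Real.exp t * t.factorial
  | 0 => by simp
  | (t + 1) => by
    have ih := pow_self_le_exp_mul_factorial t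
    have ht : (0:ℝ) ≤ t := Nat.cast_nonneg t
    have h1 : ((t : ℝ) + 1) ^ t ≤ Real.exp 1 * (t : ℝ) ^ t := by
      rcases Nat.eq_zero_or_pos t with h | h
      · subst h; simpa using Real.one_le_exp (by norm_num : (0:ℝ) ≤ 1)
      · have htpos : (0:ℝ) < t := by exact_mod_cast h
        have h2 : (t : ℝ) + 1 ≤ (t : ℝ) * Real.exp (1 / t) := by
          have := Real.add_one_le_exp (1 / (t:ℝ))
          calc (t:ℝ) + 1 = (t:ℝ) * (1/(t:ℝ) + 1) := by field_simp; ring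
            _ ≤ (t:ℝ) * Real.exp (1/(t:ℝ)) := by
                exact mul_le_mul_of_nonneg_left this ht
        calc ((t:ℝ)+1)^t ≤ ((t:ℝ) * Real.exp (1/t))^t := by
              exact pow_le_pow_left₀ (by positivity) h2 t
          _ = (t:ℝ)^t * Real.exp (1/t) ^ t := mul_pow _ _ _
          _ = (t:ℝ)^t * Real.exp (t * (1/t)) := by rw [Real.exp_nat_mul]
          _ = Real.exp 1 * (t:ℝ)^t := by
              rw [mul_one_div, div_self (ne_of_gt (by exact_mod_cast h))]
              ring
    push_cast
    calc ((t:ℝ)+1)^(t+1) = ((t:ℝ)+1) * ((t:ℝ)+1)^t := by ring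
      _ ≤ ((t:ℝ)+1) * (Real.exp 1 * (t:ℝ)^t) := by
          exact mul_le_mul_of_nonneg_left h1 (by positivity)
      _ ≤ ((t:ℝ)+1) * (Real.exp 1 * (Real.exp t * t.factorial)) := by
          have := mul_le_mul_of_nonneg_left ih (Real.exp_pos 1).le
          exact mul_le_mul_of_nonneg_left this (by positivity)
      _ = Real.exp ((t:ℝ)+1) * (((t:ℝ)+1) * (t.factorial:ℝ)) := by
          rw [Real.exp_add]
          ring
      _ = Real.exp ((t:ℝ)+1) * (((t+1).factorial : ℕ) : ℝ) := by
          rw [Nat.factorial_succ]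
          push_cast
          ring

/-- `C(n,k) ≤ e^k (n/k)^k` for `k ≥ 1`. -/
lemma choose_le_exp_pow (n k : ℕ) (hk : 1 ≤ k) :
    (n.choose k : ℝ) ≤ Real.exp k * ((n : ℝ) / k) ^ k := by
  have hkpos : (0:ℝ) < k := by exact_mod_cast hk
  have h1 : (n.choose k : ℝ) ≤ (n ^ k : ℝ) / k.factorial := Nat.choose_le_pow_div k n
  have h2 : (k:ℝ)^k ≤ Real.exp k * k.factorial := pow_self_le_exp_mul_factorial k
  have hfac : (0:ℝ) < k.factorial := by exact_mod_cast k.factorial_pos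
  rw [le_div_iff₀ hfac] at h1
  rw [show Real.exp (k:ℝ) * ((n:ℝ)/k)^k = (Real.exp (k:ℝ) * ((n:ℝ)/k)^k * k.factorial) / k.factorial by field_simp, le_div_iff₀ hfac]
  calc (n.choose k : ℝ) * k.factorial ≤ (n:ℝ)^k := by push_cast at h1 ⊢; exact h1
    _ = ((n:ℝ)/k)^k * (k:ℝ)^k := by
        rw [← mul_pow]
        field_simp
    _ ≤ ((n:ℝ)/k)^k * (Real.exp k * k.factorial) := by
        exact mul_le_mul_of_nonneg_left h2 (by positivity)
    _ = Real.exp (k:ℝ) * ((n:ℝ)/k)^k * (k.factorial:ℝ) := by ring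

/-- monotone ratio bound for binomials: `C(t,d) · m^d ≤ C(m,d) · t^d` when `t ≤ m`. -/
lemma choose_mul_pow_le {t m : ℕ} (d : ℕ) (h : t ≤ m) :
    t.choose d * m ^ d ≤ m.choose d * t ^ d := by
  have key : t.descFactorial d * m ^ d ≤ m.descFactorial d * t ^ d := by
    rw [Nat.descFactorial_eq_prod_range, Nat.descFactorial_eq_prod_range]
    have hm : m ^ d = ∏ _i ∈ Finset.range d, m := by rw [Finset.prod_const, Finset.card_range]
    have htt : t ^ d = ∏ _i ∈ Finset.range d, t := by rw [Finset.prod_const, Finset.card_range]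
    rw [hm, htt, ← Finset.prod_mul_distrib, ← Finset.prod_mul_distrib]
    apply Finset.prod_le_prod'
    intro i _
    rcases le_or_gt i t with hit | hit
    · have him : i ≤ m := hit.trans h
      rw [Nat.sub_mul, Nat.sub_mul]
      exact tsub_le_tsub (le_of_eq (Nat.mul_comm t m)) (Nat.mul_le_mul_left i h)
    · rw [Nat.sub_eq_zero_of_le hit.le, Nat.zero_mul]
      exact Nat.zero_le _
  have := Nat.mul_le_mul_left (d.factorial) key
  rw [Nat.descFactorial_eq_factorial_mul_choose, Nat.descFactorial_eq_factorial_mul_choose] at key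
  have hfac := d.factorial_pos
  calc t.choose d * m ^ d = (d.factorial * t.choose d * m ^ d) / d.factorial := by
        rw [Nat.mul_assoc, Nat.mul_div_cancel_left _ hfac]
    _ ≤ (d.factorial * m.choose d * t ^ d) / d.factorial := by
        apply Nat.div_le_div_right
        rw [Nat.mul_assoc, Nat.mul_assoc] at key ⊢
        exact key
    _ = m.choose d * t ^ d := by rw [Nat.mul_assoc, Nat.mul_div_cancel_left _ hfac]


lemma sum_half_pow (s : ℕ) : ∑ k ∈ Finset.Icc 1 s, ((1:ℝ)/2)^k ≤ 1 - (1/2)^s := by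
  induction s with
  | zero => simp
  | succ s ih =>
    rw [show Finset.Icc 1 (s+1) = insert (s+1) (Finset.Icc 1 s) by
      ext x; simp [Finset.mem_Icc]; omega]
    rw [Finset.sum_insert (by simp)]
    have hp : ((1:ℝ)/2)^(s+1) = (1/2)^s * (1/2) := pow_succ _ s
    linarith

lemma sum_exp_neg_lt_one (s : ℕ) : ∑ k ∈ Finset.Icc 1 s, Real.exp (-(k:ℝ)) < 1 := by
  have hhalf : Real.exp (-1 : ℝ) ≤ 1/2 := by
    rw [Real.exp_neg]
    rw [inv_le_comm₀ (Real.exp_pos 1) (by norm_num)]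
    norm_num
    linarith [Real.exp_one_gt_d9]
  have h1 : ∀ k ∈ Finset.Icc 1 s, Real.exp (-(k:ℝ)) ≤ ((1:ℝ)/2)^k := by
    intro k _
    have : Real.exp (-(k:ℝ)) = Real.exp (-1:ℝ)^k := by
      rw [← Real.exp_nat_mul]; norm_num
    rw [this]
    exact pow_le_pow_left₀ (Real.exp_pos _).le hhalf k
  calc ∑ k ∈ Finset.Icc 1 s, Real.exp (-(k:ℝ)) ≤ ∑ k ∈ Finset.Icc 1 s, ((1:ℝ)/2)^k :=
        Finset.sum_le_sum h1
    _ ≤ 1 - (1/2)^s := sum_half_pow s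
    _ < 1 := by
        have : (0:ℝ) < (1/2)^s := by positivity
        linarith

lemma exists_good (n m s d : ℕ) (θ : ℝ) (hθ1 : θ < 1)
    (hd : 1 ≤ d) (hdm : d ≤ m) (hsn : s ≤ n)
    (htm : ∀ k, 1 ≤ k → k ≤ s → ⌈(1-θ)*(d:ℝ)*k⌉₊ - 1 ≤ m)
    (hterm : ∀ k, 1 ≤ k → k ≤ s →
      (n.choose k : ℝ) * (m.choose (⌈(1-θ)*(d:ℝ)*k⌉₊ - 1)) *
        ((⌈(1-θ)*(d:ℝ)*k⌉₊ - 1).choose d : ℝ) ^ k * (m.choose d : ℝ) ^ (n - k)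
        ≤ Real.exp (-(k:ℝ)) * (m.choose d : ℝ) ^ n) :
    ∃ ω : Fin n → Finset (Fin m), (∀ i, (ω i).card = d) ∧
      ∀ I : Finset (Fin n), I.card ≤ s → (1-θ)*d*I.card ≤ ((I.biUnion ω).card : ℝ) := by
  classical
  set t : ℕ → ℕ := fun k => ⌈(1-θ)*(d:ℝ)*k⌉₊ - 1 with ht_def
  set Ω : Finset (Fin n → Finset (Fin m)) :=
    Fintype.piFinset (fun _ => (univ : Finset (Fin m)).powersetCard d) with hΩ
  set Bad : Finset (Fin n → Finset (Fin m)) :=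
    Ω.filter (fun ω => ∃ I : Finset (Fin n), I.card ≤ s ∧
      ((I.biUnion ω).card : ℝ) < (1-θ)*d*I.card) with hBad
  have hcardΩ : Ω.card = (m.choose d) ^ n := by
    rw [hΩ, Fintype.card_piFinset]
    simp [Finset.card_powersetCard]
  set cover : Finset (Fin n → Finset (Fin m)) :=
    (Finset.Icc 1 s).biUnion (fun k =>
      ((univ : Finset (Fin n)).powersetCard k).biUnion (fun I =>
        ((univ : Finset (Fin m)).powersetCard (t k)).biUnion (fun T =>
          Fintype.piFinset (fun i => if i ∈ I then T.powersetCard d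
            else (univ : Finset (Fin m)).powersetCard d)))) with hcover
  -- membership in Ω gives regular degrees
  have hΩdeg : ∀ ω ∈ Ω, ∀ i, (ω i).card = d := by
    intro ω hω i
    have := (Fintype.mem_piFinset.mp hω) i
    exact (Finset.mem_powersetCard.mp this).2
  -- Bad ⊆ cover
  have hsub : Bad ⊆ cover := by
    intro ω hω
    rw [hBad, Finset.mem_filter] at hω
    obtain ⟨hωΩ, I, hIs, hlt⟩ := hω
    have hk1 : 1 ≤ I.card := by
      by_contra h
      have : I.card = 0 := by omega
      rw [this] at hlt
      push_cast at hlt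
      simp at hlt
      have : (0:ℝ) ≤ ((I.biUnion ω).card : ℝ) := by positivity
      linarith
    have hxpos : (0:ℝ) < (1-θ)*(d:ℝ)*I.card := by
      have h1 : (0:ℝ) < 1 - θ := by linarith
      have h2 : (0:ℝ) < (d:ℝ) := by exact_mod_cast hd
      have h3 : (0:ℝ) < (I.card:ℝ) := by exact_mod_cast hk1
      positivity
    have hNle : (I.biUnion ω).card ≤ t I.card := by
      have h1 : ((I.biUnion ω).card : ℝ) < (⌈(1-θ)*(d:ℝ)*I.card⌉₊ : ℝ) :=
        lt_of_lt_of_le hlt (Nat.le_ceil _)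
      have h2 : (I.biUnion ω).card < ⌈(1-θ)*(d:ℝ)*I.card⌉₊ := by exact_mod_cast h1
      have h3 : 1 ≤ ⌈(1-θ)*(d:ℝ)*I.card⌉₊ := by
        rw [Nat.one_le_ceil_iff]
        exact hxpos
      have htval : t I.card = ⌈(1-θ)*(d:ℝ)*I.card⌉₊ - 1 := rfl
      omega
    obtain ⟨T, hNT, _, hTcard⟩ :=
      Finset.exists_subsuperset_card_eq (Finset.subset_univ (I.biUnion ω)) hNle
        (by rw [Finset.card_univ, Fintype.card_fin]; exact htm I.card hk1 hIs)
    rw [hcover]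
    refine Finset.mem_biUnion.mpr ⟨I.card, Finset.mem_Icc.mpr ⟨hk1, hIs⟩, ?_⟩
    refine Finset.mem_biUnion.mpr ⟨I, Finset.mem_powersetCard.mpr ⟨Finset.subset_univ I, rfl⟩, ?_⟩
    refine Finset.mem_biUnion.mpr ⟨T, Finset.mem_powersetCard.mpr ⟨Finset.subset_univ T, hTcard⟩, ?_⟩
    rw [Fintype.mem_piFinset]
    intro i
    by_cases hi : i ∈ I
    · rw [if_pos hi, Finset.mem_powersetCard]
      exact ⟨(Finset.subset_biUnion_of_mem ω hi).trans hNT, hΩdeg ω hωΩ i⟩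
    · rw [if_neg hi, Finset.mem_powersetCard]
      exact ⟨Finset.subset_univ _, hΩdeg ω hωΩ i⟩
  -- cardinality of inner piFinsets
  have hinner : ∀ (k : ℕ) (I : Finset (Fin n)) (T : Finset (Fin m)), I.card = k → T.card = t k →
      (Fintype.piFinset (fun i => if i ∈ I then T.powersetCard d
        else (univ : Finset (Fin m)).powersetCard d)).card
      = (t k).choose d ^ k * (m.choose d) ^ (n - k) := by
    intro k I T hI hT
    rw [Fintype.card_piFinset]
    have : ∀ i : Fin n, (if i ∈ I then T.powersetCard d
        else (univ : Finset (Fin m)).powersetCard d).card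
        = (if i ∈ I then (t k).choose d else m.choose d) := by
      intro i
      by_cases hi : i ∈ I <;>
        simp [hi, Finset.card_powersetCard, hT]
    rw [Finset.prod_congr rfl (fun i _ => this i)]
    rw [← Finset.prod_mul_prod_compl I]
    rw [Finset.prod_congr rfl (fun i hi => if_pos hi),
      Finset.prod_congr rfl (fun i hi => if_neg (Finset.mem_compl.mp hi))]
    rw [Finset.prod_const, Finset.prod_const, hI, Finset.card_compl, hI]
    simp
  -- count Bad
  have hBadcard : Bad.card ≤ ∑ k ∈ Finset.Icc 1 s,
      n.choose k * (m.choose (t k) * ((t k).choose d ^ k * (m.choose d) ^ (n - k))) := by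
    calc Bad.card ≤ cover.card := Finset.card_le_card hsub
      _ ≤ ∑ k ∈ Finset.Icc 1 s,
          (((univ : Finset (Fin n)).powersetCard k).biUnion (fun I =>
            ((univ : Finset (Fin m)).powersetCard (t k)).biUnion (fun T =>
              Fintype.piFinset (fun i => if i ∈ I then T.powersetCard d
                else (univ : Finset (Fin m)).powersetCard d)))).card :=
          Finset.card_biUnion_le
      _ ≤ ∑ k ∈ Finset.Icc 1 s,
          n.choose k * (m.choose (t k) * ((t k).choose d ^ k * (m.choose d) ^ (n - k))) := by
          apply Finset.sum_le_sum
          intro k _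
          calc _ ≤ ∑ I ∈ (univ : Finset (Fin n)).powersetCard k,
                (((univ : Finset (Fin m)).powersetCard (t k)).biUnion (fun T =>
                  Fintype.piFinset (fun i => if i ∈ I then T.powersetCard d
                    else (univ : Finset (Fin m)).powersetCard d))).card :=
                Finset.card_biUnion_le
            _ ≤ ∑ I ∈ (univ : Finset (Fin n)).powersetCard k,
                (m.choose (t k) * ((t k).choose d ^ k * (m.choose d) ^ (n - k))) := by
                apply Finset.sum_le_sum
                intro I hI
                have hIcard : I.card = k := (Finset.mem_powersetCard.mp hI).2
                calc _ ≤ ∑ T ∈ (univ : Finset (Fin m)).powersetCard (t k),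
                      (Fintype.piFinset (fun i => if i ∈ I then T.powersetCard d
                        else (univ : Finset (Fin m)).powersetCard d)).card :=
                      Finset.card_biUnion_le
                  _ = ∑ T ∈ (univ : Finset (Fin m)).powersetCard (t k),
                      ((t k).choose d ^ k * (m.choose d) ^ (n - k)) := by
                      apply Finset.sum_congr rfl
                      intro T hT
                      exact hinner k I T hIcard (Finset.mem_powersetCard.mp hT).2
                  _ = m.choose (t k) * ((t k).choose d ^ k * (m.choose d) ^ (n - k)) := by
                      rw [Finset.sum_const, Finset.card_powersetCard]
                      simp [mul_comm]
            _ = n.choose k * (m.choose (t k) * ((t k).choose d ^ k * (m.choose d) ^ (n - k))) := by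
                rw [Finset.sum_const, Finset.card_powersetCard]
                simp [mul_comm]
  -- strict inequality in ℝ
  have hchoosepos : (0:ℝ) < (m.choose d : ℝ) ^ n := by
    have := Nat.choose_pos hdm
    positivity
  have hlt : Bad.card < Ω.card := by
    have hreal : (Bad.card : ℝ) < (Ω.card : ℝ) := by
      calc (Bad.card : ℝ) ≤ ∑ k ∈ Finset.Icc 1 s,
            (n.choose k : ℝ) * (m.choose (t k)) * ((t k).choose d : ℝ) ^ k
              * (m.choose d : ℝ) ^ (n - k) := by
            have := hBadcard
            calc (Bad.card : ℝ) ≤ ((∑ k ∈ Finset.Icc 1 s,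
                n.choose k * (m.choose (t k) * ((t k).choose d ^ k * (m.choose d) ^ (n - k)))
                : ℕ) : ℝ) := by exact_mod_cast this
              _ = _ := by push_cast; exact Finset.sum_congr rfl (fun x _ => by ring)
        _ ≤ ∑ k ∈ Finset.Icc 1 s, Real.exp (-(k:ℝ)) * (m.choose d : ℝ) ^ n := by
            apply Finset.sum_le_sum
            intro k hk
            rw [Finset.mem_Icc] at hk
            exact hterm k hk.1 hk.2
        _ = (∑ k ∈ Finset.Icc 1 s, Real.exp (-(k:ℝ))) * (m.choose d : ℝ) ^ n := by
            rw [Finset.sum_mul]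
        _ < 1 * (m.choose d : ℝ) ^ n :=
            mul_lt_mul_of_pos_right (sum_exp_neg_lt_one s) hchoosepos
        _ = (Ω.card : ℝ) := by rw [one_mul, hcardΩ]; push_cast; ring
    exact_mod_cast hreal
  have : ¬ (Ω ⊆ Bad) := fun h => absurd (Finset.card_le_card h) (by omega)
  obtain ⟨ω, hωΩ, hωBad⟩ := Finset.not_subset.mp this
  refine ⟨ω, hΩdeg ω hωΩ, ?_⟩
  intro I hIs
  by_contra h
  push_neg at h
  exact hωBad (Finset.mem_filter.mpr ⟨hωΩ, I, hIs, h⟩)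


lemma arith_final (θ L u r kR dR tR : ℝ) (hθ0 : 0 < θ) (hθ1 : θ < 1)
    (hL0 : 0 ≤ L) (hu0 : 0 ≤ u) (hr0 : 0 ≤ r) (hk1 : 1 ≤ kR)
    (ht_le : tR ≤ (1-θ)*dR*kR) (htdk : tR ≤ dR*kR)
    (hr_low : 3/θ + u ≤ r) (hθd : 2*L+2 ≤ θ*dR) (hd2L : 2*L+2 ≤ dR)
    (hd0 : 0 < dR) :
    kR + tR + kR*(L+u) + (dR*kR - tR) * (-r) ≤ -kR := by
  have hk0 : (0:ℝ) ≤ kR := by linarith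
  have hθdk0 : 0 ≤ θ*(dR*kR) := by positivity
  have hdkt : θ*(dR*kR) ≤ dR*kR - tR := by nlinarith
  have e1 : θ*(dR*kR)*r ≤ (dR*kR - tR)*r := mul_le_mul_of_nonneg_right hdkt hr0
  have e2 : θ*(dR*kR)*(3/θ+u) ≤ θ*(dR*kR)*r := mul_le_mul_of_nonneg_left hr_low hθdk0
  have e3 : θ*(dR*kR)*(3/θ+u) = 3*(dR*kR) + θ*dR*kR*u := by
    field_simp
  have e4 : (2*L+2)*(kR*u) ≤ θ*dR*(kR*u) :=
    mul_le_mul_of_nonneg_right hθd (mul_nonneg hk0 hu0)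
  have e5 : (2*L+2)*kR ≤ dR*kR := mul_le_mul_of_nonneg_right hd2L hk0
  have p1 : 0 ≤ L*kR := mul_nonneg hL0 hk0
  have p2 : 0 ≤ kR*u := mul_nonneg hk0 hu0
  have p3 : 0 ≤ L*(kR*u) := mul_nonneg hL0 p2
  nlinarith [e1, e2, e3, e4, e5, p1, p2, p3]

set_option maxHeartbeats 1000000 in
lemma hterm_bound (θ : ℝ) (hθ0 : 0 < θ) (hθ1 : θ < 1) (n s d m k : ℕ)
    (hs1 : 1 ≤ s) (hsn : s ≤ n) (hk1 : 1 ≤ k) (hks : k ≤ s) (hd1 : 1 ≤ d)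
    (hdm : d ≤ m)
    (hd_low : (2 * Real.log ((n:ℝ)/s) + 2) / θ ≤ d)
    (hd_up : (d:ℝ) ≤ 3/θ * (Real.log ((n:ℝ)/s) + 1))
    (hm_low : Real.exp (3/θ) * (3/θ) * s * (Real.log ((n:ℝ)/s) + 1) ≤ m) :
    (n.choose k : ℝ) * (m.choose (⌈(1-θ)*(d:ℝ)*k⌉₊ - 1)) *
      ((⌈(1-θ)*(d:ℝ)*k⌉₊ - 1).choose d : ℝ) ^ k * (m.choose d : ℝ) ^ (n - k)
      ≤ Real.exp (-(k:ℝ)) * (m.choose d : ℝ) ^ n := by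
  set L := Real.log ((n:ℝ)/s) with hL
  have hkR : (0:ℝ) < k := by exact_mod_cast hk1
  have hsR : (0:ℝ) < s := by exact_mod_cast hs1
  have hnR : (0:ℝ) < n := by exact_mod_cast (hs1.trans hsn)
  have hdR : (0:ℝ) < d := by exact_mod_cast hd1
  have hmR : (0:ℝ) < m := by exact_mod_cast (hd1.trans hdm)
  have hL0 : 0 ≤ L := Real.log_nonneg (by
    rw [le_div_iff₀ hsR]; norm_num; exact_mod_cast hsn)
  set x := (1-θ)*(d:ℝ)*k with hx
  have hx0 : 0 < x := by
    have : (0:ℝ) < 1 - θ := by linarith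
    positivity
  set tn := ⌈x⌉₊ - 1 with htn
  rcases Nat.eq_zero_or_pos tn with htn0 | htn1
  · have hz : ((tn.choose d : ℕ) : ℝ) = 0 := by
      rw [htn0, Nat.choose_eq_zero_of_lt (by omega)]
      norm_num
    rw [hz, zero_pow (by omega : k ≠ 0), mul_zero, zero_mul]
    positivity
  · have hceil1 : 1 ≤ ⌈x⌉₊ := by omega
    have htnR : (0:ℝ) < tn := by exact_mod_cast htn1
    have htx : (tn:ℝ) ≤ x := by
      have h1 : ((⌈x⌉₊ : ℝ)) < x + 1 := Nat.ceil_lt_add_one hx0.le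
      have h2 : (tn:ℝ) = (⌈x⌉₊ : ℝ) - 1 := by
        rw [htn, Nat.cast_sub hceil1]; norm_num
      linarith
    have hxdk : x ≤ (d:ℝ)*k := by
      rw [hx]
      nlinarith [mul_pos hdR hkR]
    have htdk_nat : tn ≤ d*k := by
      have : (tn:ℝ) ≤ ((d*k : ℕ):ℝ) := by push_cast; linarith
      exact_mod_cast this
    have hdk_s : (d:ℝ)*k ≤ 3/θ*(L+1)*s := by
      have hks' : (k:ℝ) ≤ s := by exact_mod_cast hks
      have h1 : (d:ℝ)*k ≤ (3/θ*(L+1))*k :=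
        mul_le_mul_of_nonneg_right hd_up hkR.le
      have h2 : (3/θ*(L+1))*k ≤ (3/θ*(L+1))*s := by
        apply mul_le_mul_of_nonneg_left hks'
        positivity
      linarith
    have hexp1 : (1:ℝ) ≤ Real.exp (3/θ) := Real.one_le_exp (by positivity)
    have hm_ds : (d:ℝ)*s ≤ m := by
      have h1 : (d:ℝ)*s ≤ 3/θ*(L+1)*s := mul_le_mul_of_nonneg_right hd_up hsR.le
      have h2 : (3:ℝ)/θ*(L+1)*s ≤ Real.exp (3/θ) * (3/θ) * s * (L+1) := by
        nlinarith [hexp1, hL0, hsR, hθ0, div_pos (by norm_num : (0:ℝ)<3) hθ0,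
          mul_pos (div_pos (by norm_num : (0:ℝ)<3) hθ0) (by linarith : (0:ℝ) < L+1)]
      linarith
    have htm_R : (tn:ℝ) ≤ m := by
      have hks' : (k:ℝ) ≤ s := by exact_mod_cast hks
      have : (d:ℝ)*k ≤ (d:ℝ)*s := mul_le_mul_of_nonneg_left hks' hdR.le
      linarith
    have htm_nat : tn ≤ m := by exact_mod_cast htm_R
    -- binomial bounds
    have hA := choose_le_exp_pow n k hk1
    have hB := choose_le_exp_pow m tn htn1
    have hCnat := choose_mul_pow_le d htm_nat
    have hmd : (0:ℝ) < (m:ℝ)^d := by positivity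
    have hC : (tn.choose d : ℝ) ≤ (m.choose d : ℝ) * ((tn:ℝ)/(m:ℝ))^d := by
      rw [div_pow, ← mul_div_assoc, le_div_iff₀ hmd]
      exact_mod_cast hCnat
    -- log quantities
    have hnk_pos : (0:ℝ) < (n:ℝ)/k := by positivity
    have hmt_pos : (0:ℝ) < (m:ℝ)/tn := by positivity
    have htmq_pos : (0:ℝ) < (tn:ℝ)/m := by positivity
    set u := Real.log ((s:ℝ)/k) with hu
    set r := Real.log ((m:ℝ)/tn) with hr
    have hu0 : 0 ≤ u := Real.log_nonneg (by
      rw [le_div_iff₀ hkR]; norm_num; exact_mod_cast hks)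
    have hr0 : 0 ≤ r := Real.log_nonneg (by
      rw [le_div_iff₀ htnR]; norm_num; exact_mod_cast htm_R)
    have hlog_nk : Real.log ((n:ℝ)/k) = L + u := by
      rw [hL, hu, Real.log_div hnR.ne' hkR.ne', Real.log_div hnR.ne' hsR.ne',
        Real.log_div hsR.ne' hkR.ne']
      ring
    -- lower bound on r
    have htn_dk : (tn:ℝ) ≤ (d:ℝ)*k := by linarith
    have hr_low : 3/θ + u ≤ r := by
      have hdk_pos : (0:ℝ) < (d:ℝ)*k := by positivity
      have h1 : (m:ℝ)/((d:ℝ)*k) ≤ (m:ℝ)/tn :=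
        div_le_div_of_nonneg_left hmR.le htnR htn_dk
      have h2 : Real.exp (3/θ) * ((s:ℝ)/k) ≤ (m:ℝ)/((d:ℝ)*k) := by
        rw [le_div_iff₀ hdk_pos]
        have e1 : Real.exp (3/θ) * (s:ℝ) * ((d:ℝ)*k) ≤ Real.exp (3/θ) * (3/θ) * s * (L+1) * k := by
          have e1' : (Real.exp (3/θ) * s * k) * (d:ℝ)
              ≤ (Real.exp (3/θ) * s * k) * (3/θ*(L+1)) :=
            mul_le_mul_of_nonneg_left hd_up (by positivity)
          linarith [e1']
        have e2 : Real.exp (3/θ) * (3/θ) * s * (L+1) * k ≤ (m:ℝ) * k :=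
          mul_le_mul_of_nonneg_right hm_low hkR.le
        have e12 := e1.trans e2
        calc Real.exp (3/θ) * ((s:ℝ)/k) * ((d:ℝ)*k)
            = Real.exp (3/θ) * (s:ℝ) * ((d:ℝ)*k) / k := by
              field_simp
          _ ≤ (m:ℝ) * k / k := by gcongr
          _ = (m:ℝ) := by
              rw [mul_div_assoc, div_self hkR.ne', mul_one]
      have h3 : Real.exp (3/θ) * ((s:ℝ)/k) ≤ (m:ℝ)/tn := h2.trans h1
      have h4 : Real.log (Real.exp (3/θ) * ((s:ℝ)/k)) ≤ r :=
        Real.log_le_log (by positivity) h3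
      rw [Real.log_mul (Real.exp_pos _).ne' (by positivity), Real.log_exp] at h4
      exact h4
    have hθd : 2*L + 2 ≤ θ*(d:ℝ) := by
      rw [div_le_iff₀ hθ0] at hd_low
      linarith
    have hd2L : 2*L + 2 ≤ (d:ℝ) := by nlinarith
    have hcast : ((d*k - tn : ℕ):ℝ) = (d:ℝ)*k - tn := by
      rw [Nat.cast_sub htdk_nat]; push_cast; ring
    have hlogtm : Real.log ((tn:ℝ)/m) = -r := by
      rw [hr, ← Real.log_inv]
      congr 1
      field_simp
    -- the main log inequality
    have hlog : (k:ℝ) + tn + k * Real.log ((n:ℝ)/k)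
        + ((d*k - tn : ℕ):ℝ) * Real.log ((tn:ℝ)/m) ≤ -(k:ℝ) := by
      rw [hcast, hlog_nk, hlogtm]
      have hkR1 : (1:ℝ) ≤ (k:ℝ) := by exact_mod_cast hk1
      have := arith_final θ L u r (k:ℝ) (d:ℝ) (tn:ℝ) hθ0 hθ1 hL0 hu0 hr0 hkR1
        (by rw [hx] at htx; exact htx) htn_dk hr_low hθd hd2L hdR
      linarith [this]
    -- exponential form
    have hfac1 : ((n:ℝ)/k)^k = Real.exp ((k:ℝ) * Real.log ((n:ℝ)/k)) := by
      rw [Real.exp_nat_mul, Real.exp_log hnk_pos]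
    have hfac2 : ((tn:ℝ)/m)^(d*k - tn)
        = Real.exp (((d*k - tn : ℕ):ℝ) * Real.log ((tn:ℝ)/m)) := by
      rw [Real.exp_nat_mul, Real.exp_log htmq_pos]
    have key : Real.exp (k:ℝ) * Real.exp (tn:ℝ) * ((n:ℝ)/k)^k * ((m:ℝ)/tn)^tn
        * ((tn:ℝ)/m)^(d*k) ≤ Real.exp (-(k:ℝ)) := by
      have hsplit : ((tn:ℝ)/m)^(d*k) = ((tn:ℝ)/m)^tn * ((tn:ℝ)/m)^(d*k - tn) := by
        rw [← pow_add]
        congr 1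
        omega
      have hcancel : ((m:ℝ)/tn)^tn * ((tn:ℝ)/m)^tn = 1 := by
        rw [← mul_pow, show (m:ℝ)/tn * ((tn:ℝ)/m) = 1 by field_simp]
        exact one_pow _
      calc Real.exp (k:ℝ) * Real.exp (tn:ℝ) * ((n:ℝ)/k)^k * ((m:ℝ)/tn)^tn * ((tn:ℝ)/m)^(d*k)
          = Real.exp (k:ℝ) * Real.exp (tn:ℝ) * ((n:ℝ)/k)^k
            * (((m:ℝ)/tn)^tn * ((tn:ℝ)/m)^tn) * ((tn:ℝ)/m)^(d*k - tn) := by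
            rw [hsplit]; ring
        _ = Real.exp (k:ℝ) * Real.exp (tn:ℝ) * ((n:ℝ)/k)^k * ((tn:ℝ)/m)^(d*k - tn) := by
            rw [hcancel]; ring
        _ = Real.exp ((k:ℝ) + tn + k * Real.log ((n:ℝ)/k)
            + ((d*k - tn : ℕ):ℝ) * Real.log ((tn:ℝ)/m)) := by
            rw [hfac1, hfac2, ← Real.exp_add, ← Real.exp_add, ← Real.exp_add]
        _ ≤ Real.exp (-(k:ℝ)) := Real.exp_le_exp.mpr hlog
    -- assemble
    have h3 : ((tn.choose d : ℝ))^k ≤ ((m.choose d : ℝ) * ((tn:ℝ)/m)^d)^k :=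
      pow_le_pow_left₀ (by positivity) hC k
    calc (n.choose k : ℝ) * (m.choose tn) * ((tn.choose d : ℝ)) ^ k * (m.choose d : ℝ) ^ (n - k)
        ≤ (Real.exp (k:ℝ) * ((n:ℝ)/k)^k) * (Real.exp (tn:ℝ) * ((m:ℝ)/tn)^tn)
          * ((m.choose d : ℝ) * ((tn:ℝ)/m)^d)^k * (m.choose d : ℝ) ^ (n - k) := by
          have b2 : (0:ℝ) ≤ (m.choose tn : ℝ) := by positivity
          have b3 : (0:ℝ) ≤ ((tn.choose d : ℝ))^k := by positivity
          have b4 : (0:ℝ) ≤ (m.choose d : ℝ) ^ (n-k) := by positivity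
          apply mul_le_mul _ le_rfl b4 (by positivity)
          apply mul_le_mul _ h3 b3 (by positivity)
          exact mul_le_mul hA hB b2 (by positivity)
      _ = (Real.exp (k:ℝ) * Real.exp (tn:ℝ) * ((n:ℝ)/k)^k * ((m:ℝ)/tn)^tn
          * ((tn:ℝ)/m)^(d*k)) * ((m.choose d : ℝ)^k * (m.choose d : ℝ)^(n-k)) := by
          rw [mul_pow, ← pow_mul]
          ring
      _ = (Real.exp (k:ℝ) * Real.exp (tn:ℝ) * ((n:ℝ)/k)^k * ((m:ℝ)/tn)^tn
          * ((tn:ℝ)/m)^(d*k)) * (m.choose d : ℝ)^n := by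
          rw [← pow_add, show k + (n-k) = n from by omega]
      _ ≤ Real.exp (-(k:ℝ)) * (m.choose d : ℝ)^n :=
          mul_le_mul_of_nonneg_right key (by positivity)

end LosslessAux

/-- Existence of lossless expanders: for every `θ ∈ (0,1)` there is `c_θ > 0` such that
for all `1 ≤ s ≤ n`, with `d = ⌈(2·log(n/s) + 2)/θ⌉`, and every
`c_θ · s · (log(n/s) + 1) ≤ m ≤ n`, there exists a left `d`-regular bipartite graph
with `n` left and `m` right vertices that is an `(s, d, θ)`-lossless expander. -/
theorem lossless_expander_exists (θ : ℝ) (hθ0 : 0 < θ) (hθ1 : θ < 1) :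
    ∃ c : ℝ, 0 < c ∧
      ∀ n s : ℕ, 1 ≤ s → s ≤ n →
        ∀ d : ℕ, d = ⌈(2 * Real.log ((n : ℝ) / s) + 2) / θ⌉₊ →
          ∀ m : ℕ, c * s * (Real.log ((n : ℝ) / s) + 1) ≤ m → m ≤ n →
            ∃ E : Finset (Fin n × Fin m),
              LeftRegular E d ∧ IsLosslessExpander E s d θ := by
  classical
  refine ⟨Real.exp (3/θ) * (3/θ), by positivity, ?_⟩
  intro n s hs1 hsn d hd m hm_low hmn
  set L := Real.log ((n:ℝ)/s) with hL
  have hsR : (0:ℝ) < s := by exact_mod_cast hs1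
  have hs1R : (1:ℝ) ≤ s := by exact_mod_cast hs1
  have hnR : (0:ℝ) < n := by exact_mod_cast hs1.trans hsn
  have hL0 : 0 ≤ L := Real.log_nonneg (by
    rw [le_div_iff₀ hsR]; norm_num; exact_mod_cast hsn)
  have hy0 : (0:ℝ) < (2*L+2)/θ := by positivity
  have hd1 : 1 ≤ d := by
    rw [hd, Nat.one_le_ceil_iff]
    exact hy0
  have hdR : (0:ℝ) < d := by exact_mod_cast hd1
  have hd_low : (2*L+2)/θ ≤ (d:ℝ) := by
    rw [hd]
    exact Nat.le_ceil ((2*L+2)/θ)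
  have hd_up : (d:ℝ) ≤ 3/θ*(L+1) := by
    rw [hd]
    have h0 : ((⌈(2*L+2)/θ⌉₊ : ℝ)) < (2*L+2)/θ + 1 := Nat.ceil_lt_add_one hy0.le
    have h1 : (1:ℝ) ≤ (L+1)/θ := by
      rw [le_div_iff₀ hθ0]; linarith
    have h2 : (2*L+2)/θ + (L+1)/θ = 3/θ*(L+1) := by
      field_simp
      ring
    have : ((⌈(2*Real.log ((n:ℝ)/s)+2)/θ⌉₊ : ℝ)) = ((⌈(2*L+2)/θ⌉₊ : ℝ)) := by rw [← hL]
    rw [this]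
    linarith
  have hexp1 : (1:ℝ) ≤ Real.exp (3/θ) := Real.one_le_exp (by positivity)
  have hm_low' : Real.exp (3/θ)*(3/θ)*s*(L+1) ≤ (m:ℝ) := by
    calc Real.exp (3/θ)*(3/θ)*s*(L+1) = Real.exp (3/θ)*(3/θ)*(s:ℝ)*(L+1) := by ring
      _ ≤ m := hm_low
  have hP0 : (0:ℝ) ≤ 3/θ*(L+1) := by positivity
  have hds_m : (d:ℝ)*s ≤ m := by
    have h1 : (d:ℝ)*s ≤ 3/θ*(L+1)*s := mul_le_mul_of_nonneg_right hd_up hsR.le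
    have h2 : (1:ℝ) ≤ Real.exp (3/θ) * 1 := by linarith
    have h3 : (3:ℝ)/θ*(L+1)*s ≤ Real.exp (3/θ)*(3/θ)*s*(L+1) := by
      nlinarith [mul_nonneg hP0 hsR.le, hexp1, mul_nonneg (mul_nonneg hP0 hsR.le) (by linarith : (0:ℝ) ≤ Real.exp (3/θ) - 1)]
    linarith
  have hdm : d ≤ m := by
    have h4 : (d:ℝ) ≤ (d:ℝ)*s := by nlinarith
    have : (d:ℝ) ≤ (m:ℝ) := by linarith
    exact_mod_cast this
  have htm : ∀ k, 1 ≤ k → k ≤ s → ⌈(1-θ)*(d:ℝ)*k⌉₊ - 1 ≤ m := by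
    intro k hk1 hks
    by_cases hc : ⌈(1-θ)*(d:ℝ)*k⌉₊ = 0
    · simp [hc]
    · have hc1 : 1 ≤ ⌈(1-θ)*(d:ℝ)*k⌉₊ := by omega
      have hθ' : (0:ℝ) ≤ 1 - θ := by linarith
      have hkR : (0:ℝ) < k := by exact_mod_cast hk1
      have h1 : ((⌈(1-θ)*(d:ℝ)*k⌉₊ - 1 : ℕ):ℝ) ≤ (1-θ)*(d:ℝ)*k := by
        rw [Nat.cast_sub hc1]
        push_cast
        have := Nat.ceil_lt_add_one (by positivity : (0:ℝ) ≤ (1-θ)*(d:ℝ)*k)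
        linarith
      have h2 : (1-θ)*(d:ℝ)*k ≤ (d:ℝ)*k := by nlinarith [mul_pos hdR hkR]
      have h3 : (d:ℝ)*k ≤ (d:ℝ)*s :=
        mul_le_mul_of_nonneg_left (by exact_mod_cast hks) hdR.le
      have : ((⌈(1-θ)*(d:ℝ)*k⌉₊ - 1 : ℕ):ℝ) ≤ (m:ℝ) := by linarith
      exact_mod_cast this
  obtain ⟨ω, hreg, hexp⟩ := LosslessAux.exists_good n m s d θ hθ1 hd1 hdm hsn htm
    (fun k hk1 hks => LosslessAux.hterm_bound θ hθ0 hθ1 n s d m k hs1 hsn hk1 hks hd1 hdm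
      hd_low hd_up hm_low')
  set E : Finset (Fin n × Fin m) := Finset.univ.filter (fun p => p.2 ∈ ω p.1) with hE
  have hNbrs : ∀ I : Finset (Fin n), rightNbrs E I = I.biUnion ω := by
    intro I
    ext j
    simp [rightNbrs, hE, Finset.mem_biUnion]
  have hregE : LeftRegular E d := by
    intro i
    rw [hNbrs, Finset.singleton_biUnion]
    exact hreg i
  exact ⟨E, hregE, hregE, fun I hI => by rw [hNbrs]; exact hexp I hI⟩
end
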